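/- Let s > 0, 1 ≤ p < ∞, 1/τ = 1/p + s/d, 1/q = 1 + s/d, and let (f_I)_{I∈D} be nonnegative-coefficient data with maximal function M(x) = (Σ_{I∈D}|I|^{-sq/d}|f_I|^q χ_I(x))^{1/q} satisfying ‖M‖_{L^τ} < ∞. With z_I(x) = |f_I|^q|I|^{-qs/d}χ_I(x) and Z_I(x) = Σ_{I⊆I'} z_{I'}(x), for every ε > 0 there is C_ε such that pointwise Σ_{I∈D} z_I(x) Z_I(x)^{ε-1} ≤ C_ε M(x)^{qε}, and consequently ‖x ↦ Σ_{I∈D} z_I(x)Z_I(x)^{(τ/(pq))-1}‖_{L^p} ≤ C ‖M‖_{L^τ}^{τ/p}, with C depending only on p, s, d. -/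

import Mathlib

open MeasureTheory
open scoped ENNReal

def dyadicCube (d : ℕ) (j : ℤ) (m : Fin d → ℤ) : Set (EuclideanSpace ℝ (Fin d)) :=
  {x | ∀ i, (2:ℝ) ^ j * (m i : ℝ) ≤ x i ∧ x i ≤ (2:ℝ) ^ j * ((m i : ℝ) + 1)}

noncomputable def dyadicVol (d : ℕ) (I : ℤ × (Fin d → ℤ)) : ℝ≥0∞ :=
  (2 : ℝ≥0∞) ^ (I.1 * (d : ℤ))

/-- The basic summand `z_I(x) = |f_I|^q |I|^{-qs/d} χ_I(x)`. -/
noncomputable def zFn (d : ℕ) (s q : ℝ) (f : ℤ × (Fin d → ℤ) → ℝ)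
    (I : ℤ × (Fin d → ℤ)) (x : EuclideanSpace ℝ (Fin d)) : ℝ≥0∞ :=
  (dyadicVol d I) ^ (-(q * s) / d) * ENNReal.ofReal |f I| ^ q *
    (dyadicCube d I.1 I.2).indicator (fun _ => (1 : ℝ≥0∞)) x

/-- The partial sum `Z_I(x) = Σ_{I⊆I'} z_{I'}(x)` over dyadic ancestors. -/
noncomputable def zPartial (d : ℕ) (s q : ℝ) (f : ℤ × (Fin d → ℤ) → ℝ)
    (I : ℤ × (Fin d → ℤ)) (x : EuclideanSpace ℝ (Fin d)) : ℝ≥0∞ :=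
  ∑' I' : {p : ℤ × (Fin d → ℤ) // dyadicCube d I.1 I.2 ⊆ dyadicCube d p.1 p.2},
    zFn d s q f (I' : ℤ × (Fin d → ℤ)) x

/-- The maximal function `M(x) = (Σ_I z_I(x))^{1/q}`. -/
noncomputable def sqMaxFn (d : ℕ) (s q : ℝ) (f : ℤ × (Fin d → ℤ) → ℝ)
    (x : EuclideanSpace ℝ (Fin d)) : ℝ≥0∞ :=
  (∑' I : ℤ × (Fin d → ℤ), zFn d s q f I x) ^ (1 / q)


/-- Real core inequality: `ε g A^(ε-1) + B^ε ≤ A^ε` when `A = g + B`. -/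
lemma dr_real_key {ε A B g : ℝ} (hε0 : 0 < ε) (hε1 : ε < 1) (hB : 0 ≤ B) (hg : 0 ≤ g)
    (hA : A = g + B) (hA0 : 0 < A) :
    ε * (g * A ^ (ε - 1)) + B ^ ε ≤ A ^ ε := by
  have hBA : B ≤ A := by linarith
  set t : ℝ := B / A with ht
  have ht0 : 0 ≤ t := div_nonneg hB hA0.le
  have key : t ^ ε ≤ 1 + ε * (t - 1) := by
    have h := rpow_one_add_le_one_add_mul_self (s := t - 1) (by linarith) hε0.le hε1.le
    simpa using h
  have hAε : (0:ℝ) < A ^ ε := Real.rpow_pos_of_pos hA0 _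
  have h1 : B ^ ε = t ^ ε * A ^ ε := by
    rw [ht, Real.div_rpow hB hA0.le]
    field_simp
  have h2 : g * A ^ (ε - 1) = (1 - t) * A ^ ε := by
    have hAe : A ^ (ε - 1) = A ^ ε / A := by
      rw [Real.rpow_sub hA0, Real.rpow_one]
    rw [hAe, ht]
    field_simp
    linarith
  rw [h1, h2]
  nlinarith [key, hAε]

/-- ENNReal one-step inequality for the telescoping argument. -/
lemma dr_step {ε : ℝ} (hε0 : 0 < ε) (hε1 : ε < 1) {g B : ℝ≥0∞} (hg : g ≠ ∞) (hB : B ≠ ∞) :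
    g * (g + B) ^ (ε - 1) + ENNReal.ofReal (1/ε) * B ^ ε
      ≤ ENNReal.ofReal (1/ε) * (g + B) ^ ε := by
  by_cases hA0 : g + B = 0
  · have hg0 : g = 0 := by simpa using (add_eq_zero.mp hA0).1
    have hB0 : B = 0 := by simpa using (add_eq_zero.mp hA0).2
    simp [hA0, hg0, hB0, ENNReal.zero_rpow_of_pos hε0]
  · have hA : g + B ≠ ∞ := by
      simp [ENNReal.add_ne_top, hg, hB]
    have hAε : (g + B) ^ (ε - 1) ≠ ∞ := by
      rw [show ε - 1 = -(1 - ε) by ring, ENNReal.rpow_neg]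
      exact ENNReal.inv_ne_top.mpr (by
        intro h0
        rcases ENNReal.rpow_eq_zero_iff.mp h0 with ⟨h, -⟩ | ⟨h, -⟩
        exacts [hA0 h, hA h])
    have h1 : g * (g + B) ^ (ε - 1) ≠ ∞ := ENNReal.mul_ne_top hg hAε
    have h2 : ENNReal.ofReal (1/ε) * B ^ ε ≠ ∞ :=
      ENNReal.mul_ne_top ENNReal.ofReal_ne_top (ENNReal.rpow_ne_top_of_nonneg hε0.le hB)
    have h3 : ENNReal.ofReal (1/ε) * (g + B) ^ ε ≠ ∞ :=
      ENNReal.mul_ne_top ENNReal.ofReal_ne_top (ENNReal.rpow_ne_top_of_nonneg hε0.le hA)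
    rw [← ENNReal.toReal_le_toReal (ENNReal.add_ne_top.mpr ⟨h1, h2⟩) h3]
    rw [ENNReal.toReal_add h1 h2, ENNReal.toReal_mul, ENNReal.toReal_mul, ENNReal.toReal_mul,
      ← ENNReal.toReal_rpow, ← ENNReal.toReal_rpow, ← ENNReal.toReal_rpow,
      ENNReal.toReal_ofReal (by positivity)]
    set G := g.toReal
    set Bb := B.toReal
    have hGB : (g + B).toReal = G + Bb := ENNReal.toReal_add hg hB
    rw [hGB]
    have hA0' : 0 < G + Bb := by
      rw [← hGB]; exact ENNReal.toReal_pos hA0 hA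
    have key := dr_real_key hε0 hε1 (ENNReal.toReal_nonneg (a := B))
      (ENNReal.toReal_nonneg (a := g)) rfl hA0'
    have hεinv : (0:ℝ) < 1/ε := by positivity
    calc G * (G + Bb) ^ (ε - 1) + 1/ε * Bb ^ ε
        = 1/ε * (ε * (G * (G + Bb) ^ (ε - 1)) + Bb ^ ε) := by
          field_simp
      _ ≤ 1/ε * (G + Bb) ^ ε := by
          exact mul_le_mul_of_nonneg_left key hεinv.le

/-- Telescoping chain lemma over ℤ. -/
lemma dr_chain {ε : ℝ} (hε0 : 0 < ε) (hε1 : ε < 1) (g G : ℤ → ℝ≥0∞) (Z : ℝ≥0∞)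
    (hZ : Z ≠ ∞) (hrec : ∀ j, G j = g j + G (j+1)) (hle : ∀ j, G j ≤ Z) :
    ∑' j : ℤ, g j * G j ^ (ε - 1) ≤ ENNReal.ofReal (1/ε) * Z ^ ε := by
  have hGfin : ∀ j, G j ≠ ∞ := fun j => ne_top_of_le_ne_top hZ (hle j)
  have hgfin : ∀ j, g j ≠ ∞ := fun j =>
    ne_top_of_le_ne_top (hGfin j) (by rw [hrec j]; exact le_self_add)
  have main : ∀ (n : ℕ) (a : ℤ),
      (∑ i ∈ Finset.range n, g (a + i) * G (a + i) ^ (ε - 1))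
        + ENNReal.ofReal (1/ε) * G (a + n) ^ ε ≤ ENNReal.ofReal (1/ε) * G a ^ ε := by
    intro n
    induction n with
    | zero => intro a; simp
    | succ n ih =>
      intro a
      rw [Finset.sum_range_succ']
      have e2 : (∑ i ∈ Finset.range n, g (a + (↑(i+1) : ℤ)) * G (a + (↑(i+1) : ℤ)) ^ (ε - 1))
          = ∑ i ∈ Finset.range n, g ((a+1) + (i:ℤ)) * G ((a+1) + (i:ℤ)) ^ (ε - 1) := by
        refine Finset.sum_congr rfl fun i _ => ?_
        have : a + (↑(i+1) : ℤ) = (a+1) + (i:ℤ) := by push_cast; ring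
        rw [this]
      have e3 : a + ((n:ℤ)+1) = (a+1) + (n:ℤ) := by ring
      push_cast
      rw [e3]
      push_cast at e2
      rw [e2]
      have ih' := ih (a+1)
      calc (∑ i ∈ Finset.range n, g ((a+1) + (i:ℤ)) * G ((a+1) + (i:ℤ)) ^ (ε - 1))
            + g (a + 0) * G (a + 0) ^ (ε - 1) + ENNReal.ofReal (1/ε) * G ((a+1) + (n:ℤ)) ^ ε
          = ((∑ i ∈ Finset.range n, g ((a+1) + (i:ℤ)) * G ((a+1) + (i:ℤ)) ^ (ε - 1))
            + ENNReal.ofReal (1/ε) * G ((a+1) + (n:ℤ)) ^ ε) + g a * G a ^ (ε - 1) := by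
            rw [add_zero]; ring
        _ ≤ ENNReal.ofReal (1/ε) * G (a+1) ^ ε + g a * G a ^ (ε - 1) :=
            add_le_add_left ih' _
        _ ≤ ENNReal.ofReal (1/ε) * G a ^ ε := by
            rw [hrec a, add_comm]
            exact dr_step hε0 hε1 (hgfin a) (hGfin (a+1))
  rw [ENNReal.tsum_eq_iSup_sum]
  apply iSup_le
  intro t
  rcases t.eq_empty_or_nonempty with rfl | hne
  · simp
  · set a := t.min' hne
    set b := t.max' hne
    set n : ℕ := (b - a + 1).toNat with hn
    have hab : a ≤ b := t.min'_le _ (t.max'_mem hne)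
    have hsub : t ⊆ (Finset.range n).image (fun i : ℕ => a + (i : ℤ)) := by
      intro j hj
      have h1 : a ≤ j := t.min'_le j hj
      have h2 : j ≤ b := t.le_max' j hj
      refine Finset.mem_image.mpr ⟨(j - a).toNat, Finset.mem_range.mpr (by omega), by omega⟩
    calc ∑ j ∈ t, g j * G j ^ (ε - 1)
        ≤ ∑ j ∈ (Finset.range n).image (fun i : ℕ => a + (i : ℤ)), g j * G j ^ (ε - 1) :=
          Finset.sum_le_sum_of_subset hsub
      _ = ∑ i ∈ Finset.range n, g (a + i) * G (a + i) ^ (ε - 1) :=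
          Finset.sum_image (fun i _ j _ h => by omega)
      _ ≤ ENNReal.ofReal (1/ε) * G a ^ ε :=
          le_trans le_self_add (main n a)
      _ ≤ ENNReal.ofReal (1/ε) * Z ^ ε :=
          mul_le_mul_right (ENNReal.rpow_le_rpow (hle a) hε0.le) _


/-- One-dimensional dyadic interval nesting. -/
lemma dr_interval_nest {j j' : ℤ} (hjj : j ≤ j') {m m' : ℤ} {a : ℝ}
    (h1 : (2:ℝ)^j * m ≤ a) (h2 : a ≤ (2:ℝ)^j * (m+1))
    (h1' : (2:ℝ)^j' * m' ≤ a) (h2' : a ≤ (2:ℝ)^j' * (m'+1))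
    (hiff : (a < (2:ℝ)^j * (m+1)) ↔ (a < (2:ℝ)^j' * (m'+1))) :
    (2:ℝ)^j' * m' ≤ (2:ℝ)^j * m ∧ (2:ℝ)^j * (m+1) ≤ (2:ℝ)^j' * (m'+1) := by
  have h2j : (0:ℝ) < (2:ℝ)^j := by positivity
  set n : ℕ := (j' - j).toNat with hn
  have hj' : j' = j + (n : ℤ) := by omega
  have hpow : (2:ℝ)^j' = (2:ℝ)^j * ((2^n : ℤ) : ℝ) := by
    rw [hj', zpow_add₀ (by norm_num : (2:ℝ) ≠ 0)]
    push_cast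
    rw [zpow_natCast]
  set K : ℤ := 2^n with hK
  by_cases hlt : a < (2:ℝ)^j * (m+1)
  · have hlt' : a < (2:ℝ)^j' * (m'+1) := hiff.mp hlt
    have c1 : K * m' ≤ m := by
      have hr : (2:ℝ)^j * ((K : ℝ) * m') < (2:ℝ)^j * ((m:ℝ)+1) := by
        calc (2:ℝ)^j * ((K : ℝ) * m') = (2:ℝ)^j' * m' := by rw [hpow]; ring
          _ ≤ a := h1'
          _ < _ := hlt
      have hi := (mul_lt_mul_iff_right₀ h2j).mp hr
      have : K * m' < m + 1 := by
        exact_mod_cast (by push_cast; push_cast at hi; linarith :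
          ((K * m' : ℤ) : ℝ) < ((m + 1 : ℤ) : ℝ))
      omega
    have c2 : m + 1 ≤ K * (m' + 1) := by
      have hr : (2:ℝ)^j * (m:ℝ) < (2:ℝ)^j * ((K : ℝ) * ((m':ℝ)+1)) := by
        calc (2:ℝ)^j * (m:ℝ) ≤ a := h1
          _ < (2:ℝ)^j' * ((m':ℝ)+1) := hlt'
          _ = (2:ℝ)^j * ((K : ℝ) * ((m':ℝ)+1)) := by rw [hpow]; ring
      have hi := (mul_lt_mul_iff_right₀ h2j).mp hr
      have : m < K * (m' + 1) := by
        exact_mod_cast (by push_cast; push_cast at hi; linarith :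
          ((m : ℤ) : ℝ) < ((K * (m' + 1) : ℤ) : ℝ))
      omega
    have d1 : ((K * m' : ℤ) : ℝ) ≤ ((m : ℤ) : ℝ) := by exact_mod_cast c1
    have d2 : ((m + 1 : ℤ) : ℝ) ≤ ((K * (m' + 1) : ℤ) : ℝ) := by exact_mod_cast c2
    push_cast at d1 d2
    constructor
    · rw [hpow]
      nlinarith
    · rw [hpow]
      nlinarith
  · have ha : a = (2:ℝ)^j * ((m:ℝ)+1) := le_antisymm h2 (not_lt.mp hlt)
    have hlt' : ¬ a < (2:ℝ)^j' * ((m':ℝ)+1) := fun h => hlt (hiff.mpr h)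
    have ha' : a = (2:ℝ)^j' * ((m':ℝ)+1) := le_antisymm h2' (not_lt.mp hlt')
    have hploe : (2:ℝ)^j ≤ (2:ℝ)^j' := zpow_le_zpow_right₀ (by norm_num) hjj
    constructor
    · have e1 : (2:ℝ)^j' * (m':ℝ) = a - (2:ℝ)^j' := by rw [ha']; ring
      have e2 : (2:ℝ)^j * (m:ℝ) = a - (2:ℝ)^j := by rw [ha]; ring
      rw [e1, e2]
      linarith
    · rw [← ha, ← ha']

/-- Dyadic cubes containing a common point, of comparable scale and the same "side class",
are nested. -/
lemma dr_cube_nest {d : ℕ} {j j' : ℤ} (hjj : j ≤ j') {m m' : Fin d → ℤ}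
    {x : EuclideanSpace ℝ (Fin d)} (hx : x ∈ dyadicCube d j m) (hx' : x ∈ dyadicCube d j' m')
    (hcc : ∀ i, (x i < (2:ℝ)^j * (m i + 1)) ↔ (x i < (2:ℝ)^j' * (m' i + 1))) :
    dyadicCube d j m ⊆ dyadicCube d j' m' := by
  intro y hy
  intro i
  obtain ⟨ha1, ha2⟩ := hx i
  obtain ⟨hb1, hb2⟩ := hx' i
  obtain ⟨hc1, hc2⟩ := dr_interval_nest hjj ha1 ha2 hb1 hb2 (hcc i)
  obtain ⟨hy1, hy2⟩ := hy i
  exact ⟨le_trans hc1 hy1, le_trans hy2 hc2⟩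

/-- Side class of a cube relative to a point: records for each coordinate whether the point
is strictly below the right face. -/
noncomputable def dyadicClass (d : ℕ) (x : EuclideanSpace ℝ (Fin d))
    (I : ℤ × (Fin d → ℤ)) : Fin d → Bool :=
  fun i => @decide (x i < (2:ℝ)^I.1 * (I.2 i + 1)) (Classical.propDecidable _)

lemma dr_class_iff {d : ℕ} {x : EuclideanSpace ℝ (Fin d)} {I I' : ℤ × (Fin d → ℤ)}
    (h : dyadicClass d x I = dyadicClass d x I') (i : Fin d) :
    (x i < (2:ℝ)^I.1 * (I.2 i + 1)) ↔ (x i < (2:ℝ)^I'.1 * (I'.2 i + 1)) := by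
  have := congrFun h i
  unfold dyadicClass at this
  exact decide_eq_decide.mp this

lemma zFn_mem_of_ne_zero {d : ℕ} {s q : ℝ} {f : ℤ × (Fin d → ℤ) → ℝ} {I : ℤ × (Fin d → ℤ)}
    {x : EuclideanSpace ℝ (Fin d)} (h : zFn d s q f I x ≠ 0) :
    x ∈ dyadicCube d I.1 I.2 := by
  by_contra hx
  apply h
  simp [zFn, Set.indicator_of_notMem hx]

lemma dr_tsum_ite {β : Type*} [DecidableEq β] (b : β) (a : ℝ≥0∞) :
    ∑' x : β, (if b = x then a else 0) = a := by
  rw [tsum_eq_single b (fun c hc => by simp [Ne.symm hc])]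
  · simp

lemma dr_rpow_anti {a b : ℝ≥0∞} (h : a ≤ b) {y : ℝ} (hy : y < 0) : b ^ y ≤ a ^ y := by
  have h1 : a ^ (-y) ≤ b ^ (-y) := ENNReal.rpow_le_rpow h (by linarith)
  have e : ∀ c : ℝ≥0∞, c ^ y = (c ^ (-y))⁻¹ := fun c => by
    rw [← ENNReal.rpow_neg, neg_neg]
  rw [e a, e b]
  exact ENNReal.inv_le_inv.mpr h1

lemma dr_pointwise {d : ℕ} (s q : ℝ) (f : ℤ × (Fin d → ℤ) → ℝ) {ε : ℝ}
    (hε0 : 0 < ε) (hε1 : ε < 1) (x : EuclideanSpace ℝ (Fin d)) :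
    (∑' I : ℤ × (Fin d → ℤ), zFn d s q f I x * (zPartial d s q f I x) ^ (ε - 1))
      ≤ ((2:ℝ≥0∞)^d * ENNReal.ofReal (1/ε)) *
        (∑' I : ℤ × (Fin d → ℤ), zFn d s q f I x) ^ ε := by
  classical
  set z : (ℤ × (Fin d → ℤ)) → ℝ≥0∞ := fun I => zFn d s q f I x with hzdef
  set Z := ∑' I : ℤ × (Fin d → ℤ), z I with hZdef
  have hCne : ((2:ℝ≥0∞)^d * ENNReal.ofReal (1/ε)) ≠ 0 := by
    apply mul_ne_zero
    · exact pow_ne_zero _ (by norm_num)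
    · exact (ENNReal.ofReal_pos.mpr (by positivity)).ne'
  by_cases hZ : Z = ∞
  · rw [hZ, ENNReal.top_rpow_of_pos hε0, ENNReal.mul_top hCne]
    exact le_top
  -- the σ-class decomposition
  set h' : (Fin d → Bool) → ℤ → (ℤ × (Fin d → ℤ)) → ℝ≥0∞ :=
    fun σ j I' => if (dyadicClass d x I' = σ ∧ j ≤ I'.1) then z I' else 0 with hh
  set Gg : (Fin d → Bool) → ℤ → ℝ≥0∞ := fun σ j => ∑' I', h' σ j I' with hGdef
  set gg : (Fin d → Bool) → ℤ → ℝ≥0∞ :=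
    fun σ j => ∑' I', (if (dyadicClass d x I' = σ ∧ I'.1 = j) then z I' else 0) with hgdef
  have hrec : ∀ σ j, Gg σ j = gg σ j + Gg σ (j+1) := by
    intro σ j
    rw [hGdef, hgdef, ← ENNReal.tsum_add]
    apply tsum_congr
    intro I'
    simp only [hh]
    by_cases hc : dyadicClass d x I' = σ
    · by_cases he : I'.1 = j
      · simp [hc, he, (by omega : ¬ (j + 1 ≤ j))]
      · by_cases hle : j ≤ I'.1
        · have h2 : j + 1 ≤ I'.1 := by omega
          simp [hc, he, hle, h2]
        · have h2 : ¬ (j + 1 ≤ I'.1) := by omega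
          simp [hc, he, hle, h2]
    · simp [hc]
  have hleZ : ∀ σ j, Gg σ j ≤ Z := by
    intro σ j
    rw [hGdef, hZdef]
    refine Summable.tsum_le_tsum (fun I' => ?_) ENNReal.summable ENNReal.summable
    simp only [hh]
    split_ifs
    · exact le_rfl
    · exact zero_le
  have key : ∀ σ (I : ℤ × (Fin d → ℤ)), x ∈ dyadicCube d I.1 I.2 → dyadicClass d x I = σ →
      Gg σ I.1 ≤ zPartial d s q f I x := by
    intro σ I hxI hcl
    unfold zPartial
    refine le_trans ?_ (le_of_eq (tsum_subtype
      {p : ℤ × (Fin d → ℤ) | dyadicCube d I.1 I.2 ⊆ dyadicCube d p.1 p.2}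
      (fun p => zFn d s q f p x)).symm)
    refine Summable.tsum_le_tsum (fun I' => ?_) ENNReal.summable ENNReal.summable
    simp only [hh]
    by_cases hcond : dyadicClass d x I' = σ ∧ I.1 ≤ I'.1
    · rw [if_pos hcond]
      by_cases hz0 : z I' = 0
      · rw [hz0]; exact zero_le
      · have hxI' : x ∈ dyadicCube d I'.1 I'.2 := zFn_mem_of_ne_zero hz0
        have hsub : dyadicCube d I.1 I.2 ⊆ dyadicCube d I'.1 I'.2 :=
          dr_cube_nest hcond.2 hxI hxI'
            (fun i => dr_class_iff (hcl.trans hcond.1.symm) i)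
        have hind : ({p : ℤ × (Fin d → ℤ) | dyadicCube d I.1 I.2 ⊆ dyadicCube d p.1 p.2}).indicator
            (fun p => zFn d s q f p x) I' = zFn d s q f I' x :=
          Set.indicator_of_mem (show I' ∈ {p : ℤ × (Fin d → ℤ) | dyadicCube d I.1 I.2 ⊆ dyadicCube d p.1 p.2} from hsub) (fun p => zFn d s q f p x)
        rw [hind]
    · rw [if_neg hcond]; exact zero_le
  have perσ : ∀ σ : Fin d → Bool,
      (∑' I : ℤ × (Fin d → ℤ),
        (if dyadicClass d x I = σ then z I * (zPartial d s q f I x) ^ (ε - 1) else 0))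
        ≤ ENNReal.ofReal (1/ε) * Z ^ ε := by
    intro σ
    have step1 : ∀ I : ℤ × (Fin d → ℤ),
        (if dyadicClass d x I = σ then z I * (zPartial d s q f I x) ^ (ε - 1) else 0)
          ≤ ∑' j : ℤ, (if (dyadicClass d x I = σ ∧ I.1 = j) then z I else 0)
              * Gg σ j ^ (ε - 1) := by
      intro I
      by_cases hc : dyadicClass d x I = σ
      · refine le_trans ?_ (ENNReal.le_tsum I.1)
        rw [if_pos hc, if_pos ⟨hc, rfl⟩]
        by_cases hz0 : z I = 0
        · rw [hz0, zero_mul, zero_mul]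
        · have hxI : x ∈ dyadicCube d I.1 I.2 := zFn_mem_of_ne_zero hz0
          exact mul_le_mul_right (dr_rpow_anti (key σ I hxI hc) (by linarith)) _
      · rw [if_neg hc]; exact zero_le
    calc (∑' I : ℤ × (Fin d → ℤ),
          (if dyadicClass d x I = σ then z I * (zPartial d s q f I x) ^ (ε - 1) else 0))
        ≤ ∑' I : ℤ × (Fin d → ℤ), ∑' j : ℤ,
            (if (dyadicClass d x I = σ ∧ I.1 = j) then z I else 0) * Gg σ j ^ (ε - 1) :=
          Summable.tsum_le_tsum step1 ENNReal.summable ENNReal.summable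
      _ = ∑' j : ℤ, ∑' I : ℤ × (Fin d → ℤ),
            (if (dyadicClass d x I = σ ∧ I.1 = j) then z I else 0) * Gg σ j ^ (ε - 1) :=
          ENNReal.tsum_comm
      _ = ∑' j : ℤ, gg σ j * Gg σ j ^ (ε - 1) := by
          refine tsum_congr fun j => ?_
          rw [hgdef, ENNReal.tsum_mul_right]
      _ ≤ ENNReal.ofReal (1/ε) * Z ^ ε :=
          dr_chain hε0 hε1 (gg σ) (Gg σ) Z hZ (hrec σ) (hleZ σ)
  calc (∑' I : ℤ × (Fin d → ℤ), z I * (zPartial d s q f I x) ^ (ε - 1))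
      = ∑' I : ℤ × (Fin d → ℤ), ∑' σ : Fin d → Bool,
          (if dyadicClass d x I = σ then z I * (zPartial d s q f I x) ^ (ε - 1) else 0) :=
        tsum_congr fun I => (dr_tsum_ite (dyadicClass d x I) _).symm
    _ = ∑' σ : Fin d → Bool, ∑' I : ℤ × (Fin d → ℤ),
          (if dyadicClass d x I = σ then z I * (zPartial d s q f I x) ^ (ε - 1) else 0) :=
        ENNReal.tsum_comm
    _ ≤ ∑' σ : Fin d → Bool, ENNReal.ofReal (1/ε) * Z ^ ε :=
        Summable.tsum_le_tsum perσ ENNReal.summable ENNReal.summable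
    _ = ((2:ℝ≥0∞)^d * ENNReal.ofReal (1/ε)) * Z ^ ε := by
        rw [tsum_fintype]
        rw [Finset.sum_const, nsmul_eq_mul]
        rw [← mul_assoc]
        congr 1
        simp [Fintype.card_fun]

/-- Pointwise DeVore–Ron bound `Σ_I z_I(x) Z_I(x)^{ε-1} ≤ C_ε M(x)^{qε}` and the resulting
`L^p` bound `‖Σ_I z_I Z_I^{τ/(pq)-1}‖_{L^p} ≤ C ‖M‖_{L^τ}^{τ/p}`. -/
theorem devore_ron_pointwise_and_Lp (d : ℕ) (hd : 1 ≤ d) (s p τ q : ℝ)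
    (hs : 0 < s) (hp : 1 ≤ p) (hτ : 1 / τ = 1 / p + s / d) (hq : 1 / q = 1 + s / d)
    (f : ℤ × (Fin d → ℤ) → ℝ)
    (hfin : (∫⁻ x, (sqMaxFn d s q f x) ^ τ) ≠ ∞) :
    (∀ ε : ℝ, 0 < ε → ∃ C : ℝ≥0∞, C ≠ ∞ ∧ ∀ x,
        (∑' I : ℤ × (Fin d → ℤ), zFn d s q f I x * (zPartial d s q f I x) ^ (ε - 1))
          ≤ C * (sqMaxFn d s q f x) ^ (q * ε)) ∧
    (∃ C : ℝ≥0∞, C ≠ ∞ ∧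
        (∫⁻ x, (∑' I : ℤ × (Fin d → ℤ),
            zFn d s q f I x * (zPartial d s q f I x) ^ (τ / (p * q) - 1)) ^ p) ^ (1 / p)
          ≤ C * ((∫⁻ x, (sqMaxFn d s q f x) ^ τ) ^ (1 / τ)) ^ (τ / p)) := by
  have hd0 : (0:ℝ) < d := by exact_mod_cast Nat.lt_of_lt_of_le Nat.zero_lt_one hd
  have hsd : 0 < s / d := div_pos hs hd0
  have hp0 : (0:ℝ) < p := lt_of_lt_of_le one_pos hp
  have hq0 : (0:ℝ) < q := one_div_pos.mp (by rw [hq]; linarith)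
  have hτ0 : (0:ℝ) < τ := one_div_pos.mp (by rw [hτ]; positivity)
  have part1 : ∀ ε : ℝ, 0 < ε → ∃ C : ℝ≥0∞, C ≠ ∞ ∧ ∀ x,
      (∑' I : ℤ × (Fin d → ℤ), zFn d s q f I x * (zPartial d s q f I x) ^ (ε - 1))
        ≤ C * (sqMaxFn d s q f x) ^ (q * ε) := by
    intro ε hε
    have hM : ∀ x, (sqMaxFn d s q f x) ^ (q * ε)
        = (∑' I : ℤ × (Fin d → ℤ), zFn d s q f I x) ^ ε := by
      intro x
      rw [sqMaxFn, ← ENNReal.rpow_mul]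
      congr 1
      field_simp
    rcases lt_or_ge ε 1 with hε1 | hε1
    · refine ⟨(2:ℝ≥0∞)^d * ENNReal.ofReal (1/ε), ?_, fun x => ?_⟩
      · exact ENNReal.mul_ne_top
          (by exact ENNReal.pow_ne_top (by norm_num)) ENNReal.ofReal_ne_top
      · rw [hM x]
        exact dr_pointwise s q f hε hε1 x
    · refine ⟨1, ENNReal.one_ne_top, fun x => ?_⟩
      rw [hM x, one_mul]
      have hPart : ∀ I : ℤ × (Fin d → ℤ),
          zPartial d s q f I x ≤ ∑' I' : ℤ × (Fin d → ℤ), zFn d s q f I' x := fun I =>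
        ENNReal.tsum_comp_le_tsum_of_injective Subtype.val_injective
          (fun I' => zFn d s q f I' x)
      calc (∑' I : ℤ × (Fin d → ℤ), zFn d s q f I x * (zPartial d s q f I x) ^ (ε - 1))
          ≤ ∑' I : ℤ × (Fin d → ℤ), zFn d s q f I x
              * (∑' I' : ℤ × (Fin d → ℤ), zFn d s q f I' x) ^ (ε - 1) :=
            Summable.tsum_le_tsum (fun I => mul_le_mul_right
              (ENNReal.rpow_le_rpow (hPart I) (by linarith)) _)
              ENNReal.summable ENNReal.summable
        _ = (∑' I : ℤ × (Fin d → ℤ), zFn d s q f I x)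
              * (∑' I' : ℤ × (Fin d → ℤ), zFn d s q f I' x) ^ (ε - 1) :=
            ENNReal.tsum_mul_right
        _ = (∑' I : ℤ × (Fin d → ℤ), zFn d s q f I x) ^ ε := by
            rw [show (∑' I : ℤ × (Fin d → ℤ), zFn d s q f I x)
                * (∑' I' : ℤ × (Fin d → ℤ), zFn d s q f I' x) ^ (ε - 1)
              = (∑' I : ℤ × (Fin d → ℤ), zFn d s q f I x) ^ (1:ℝ)
                * (∑' I' : ℤ × (Fin d → ℤ), zFn d s q f I' x) ^ (ε - 1) by
                rw [ENNReal.rpow_one]]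
            rw [← ENNReal.rpow_add_of_nonneg 1 (ε - 1) zero_le_one (by linarith)]
            norm_num
  refine ⟨part1, ?_⟩
  -- the L^p bound
  set ε : ℝ := τ / (p * q) with hεdef
  have hε : 0 < ε := by positivity
  obtain ⟨C, hC, hCx⟩ := part1 ε hε
  refine ⟨C, hC, ?_⟩
  have hqε : q * ε = τ / p := by
    rw [hεdef]; field_simp
  have hpt : ∀ x, ((∑' I : ℤ × (Fin d → ℤ),
      zFn d s q f I x * (zPartial d s q f I x) ^ (ε - 1)) : ℝ≥0∞) ^ p
        ≤ C ^ p * (sqMaxFn d s q f x) ^ τ := by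
    intro x
    calc (∑' I : ℤ × (Fin d → ℤ), zFn d s q f I x * (zPartial d s q f I x) ^ (ε - 1)) ^ p
        ≤ (C * (sqMaxFn d s q f x) ^ (q * ε)) ^ p :=
          ENNReal.rpow_le_rpow (hCx x) hp0.le
      _ = C ^ p * ((sqMaxFn d s q f x) ^ (q * ε)) ^ p :=
          ENNReal.mul_rpow_of_nonneg _ _ hp0.le
      _ = C ^ p * (sqMaxFn d s q f x) ^ τ := by
          rw [← ENNReal.rpow_mul, hqε]
          congr 2
          field_simp
  calc (∫⁻ x, (∑' I : ℤ × (Fin d → ℤ),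
          zFn d s q f I x * (zPartial d s q f I x) ^ (τ / (p * q) - 1)) ^ p) ^ (1 / p)
      ≤ (∫⁻ x, C ^ p * (sqMaxFn d s q f x) ^ τ) ^ (1 / p) := by
        apply ENNReal.rpow_le_rpow _ (by positivity)
        exact lintegral_mono hpt
    _ = (C ^ p * ∫⁻ x, (sqMaxFn d s q f x) ^ τ) ^ (1 / p) := by
        rw [lintegral_const_mul' _ _ (ENNReal.rpow_ne_top_of_nonneg hp0.le hC)]
    _ = C * (∫⁻ x, (sqMaxFn d s q f x) ^ τ) ^ (1 / p) := by
        rw [ENNReal.mul_rpow_of_nonneg _ _ (by positivity : (0:ℝ) ≤ 1/p),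
          ← ENNReal.rpow_mul, mul_one_div, div_self hp0.ne', ENNReal.rpow_one]
    _ = C * ((∫⁻ x, (sqMaxFn d s q f x) ^ τ) ^ (1 / τ)) ^ (τ / p) := by
        rw [← ENNReal.rpow_mul]
        congr 2
        field_simp
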